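/- With notation as in the main construction, if ⟨v_n : n < ω⟩ is a sequence of vertices of H each of whose finite initial segments lies in U (the set of sequences admitting (s, ξ)-embeddings for all ξ < λ⁺), then the map n ↦ v_n is an induced-subgraph embedding of G into H. -/

import Mathlib

open Cardinal Ordinal

/-- The poset `T α`: strictly decreasing finite lists of ordinals `< α`, ordered by
reverse strict-prefix; the empty list is the top element, and the lists starting with `β`
form the copy of `T β`. -/
def TT (α : Ordinal) : Type 1 :=
  {l : List Ordinal // l.Pairwise (· > ·) ∧ ∀ x ∈ l, x < α}

instance instPOTT (α : Ordinal) : PartialOrder (TT α) where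
  le u v := v.1 <+: u.1
  le_refl u := List.prefix_refl _
  le_trans _ _ _ h1 h2 := List.IsPrefix.trans h2 h1
  le_antisymm _ _ h1 h2 :=
    Subtype.ext (List.IsPrefix.eq_of_length h2 ((List.IsPrefix.length_le h2).antisymm (List.IsPrefix.length_le h1)))

/-- The top element of `T α`. -/
def topT (α : Ordinal) : TT α := ⟨[], by simp, by simp⟩

/-- The rank function of the reversed order `⟨T α, >⟩`. -/
def dT {α : Ordinal} (v : TT α) : ℕ := v.1.length

/-- The rank function of `⟨T α, <⟩`; the top element has rank `α`. -/
def rT {α : Ordinal} (v : TT α) : Ordinal := v.1.getLastD α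

/-- The graph `G_α` on `T α`: `u ~ v` iff `u, v` are comparable and `d u ~_G d v`. -/
def Gg (G : SimpleGraph ℕ) (α : Ordinal) : SimpleGraph (TT α) where
  Adj u v := u ≠ v ∧ (u ≤ v ∨ v ≤ u) ∧ G.Adj (dT u) (dT v)
  symm := ⟨fun _ _ h => ⟨Ne.symm h.1, h.2.1.symm, h.2.2.symm⟩⟩
  loopless := ⟨fun _ h => h.1 rfl⟩

/-- The one-way infinite path `P_ω` on `ℕ`. -/
def rayG : SimpleGraph ℕ := SimpleGraph.fromRel (fun m n => n = m + 1)

/-- `A` is a (not necessarily induced) subgraph of `B`. -/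
def SubCopy {X Y : Type*} (A : SimpleGraph X) (B : SimpleGraph Y) : Prop :=
  ∃ f : X ↪ Y, ∀ u v, A.Adj u v → B.Adj (f u) (f v)

/-- `R` is (isomorphic to) the countable random graph: the extension property. -/
def IsRado (R : SimpleGraph ℕ) : Prop :=
  ∀ A B : Finset ℕ, Disjoint A B →
    ∃ v, v ∉ A ∧ v ∉ B ∧ (∀ a ∈ A, R.Adj v a) ∧ (∀ b ∈ B, ¬R.Adj v b)

/-- An `(s, ξ)`-embedding: an induced embedding of some `G_α`, `ξ ≤ α < λ⁺`, into `H`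
whose image contains `s` as the top part of a chain with `d`-values `0, …, n` and whose
last vertex has rank `> ξ`. -/
def IsSXEmb {V : Type} (G : SimpleGraph ℕ) (lam : Cardinal) (H : SimpleGraph V)
    (s : List V) (ξ : Ordinal) : Prop :=
  ∃ α : Ordinal, ξ ≤ α ∧ α < (Order.succ lam).ord ∧
    ∃ (f : Gg G α ↪g H) (t : List (TT α)),
      s = t.map ⇑f ∧
      (∀ i : Fin t.length, dT (t.get i) = i.1) ∧
      (∀ u ∈ t, ∀ v ∈ t, u ≤ v ∨ v ≤ u) ∧
      (∀ v ∈ t.getLast?, ξ < rT v)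

/-- The set `U` of finite sequences admitting `(s, ξ)`-embeddings for all `ξ < λ⁺`. -/
def UU {V : Type} (G : SimpleGraph ℕ) (lam : Cardinal) (H : SimpleGraph V) :
    Set (List V) :=
  {s | ∀ ξ < (Order.succ lam).ord, IsSXEmb G lam H s ξ}


/-- if every finite initial segment of `⟨v_n : n < ω⟩` lies in `U`,
then `n ↦ v_n` is an induced-subgraph embedding of `G` into `H`. -/
theorem stmt10 {V : Type} (lam : Cardinal) (hlam : Cardinal.aleph0 ≤ lam)
    (G : SimpleGraph ℕ) (H : SimpleGraph V) (hV : Cardinal.mk V = lam)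
    (v : ℕ → V)
    (hv : ∀ n : ℕ, (List.ofFn fun i : Fin n => v i.1) ∈ UU G lam H) :
    ∃ f : G ↪g H, ⇑f = v := by
  have hord : (0 : Ordinal) < (Order.succ lam).ord := by
    rw [Cardinal.lt_ord]
    simpa using (Cardinal.aleph0_pos.trans_le hlam).trans (Order.lt_succ lam)
  have key : ∀ N : ℕ, ∀ i j : Fin N,
      (v i = v j → i = j) ∧ (i ≠ j → (H.Adj (v i.1) (v j.1) ↔ G.Adj i.1 j.1)) := by
    intro N i j
    obtain ⟨α, -, -, f, t, hs, hd, hchain, -⟩ := hv N 0 hord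
    have hlen : t.length = N := by
      have := congrArg List.length hs
      simpa using this.symm
    have hv' : ∀ k : Fin N, v k = f (t.get ⟨k, hlen ▸ k.2⟩) := by
      intro k
      have h2 := List.getElem_of_eq hs
        (show (k : ℕ) < (List.ofFn fun i : Fin N => v i.1).length by simp)
      simp only [List.getElem_ofFn, List.getElem_map] at h2
      simpa [List.get_eq_getElem] using h2
    set ti := t.get ⟨i, hlen ▸ i.2⟩ with hti
    set tj := t.get ⟨j, hlen ▸ j.2⟩ with htj
    have hdi : dT ti = i.1 := hd ⟨i, hlen ▸ i.2⟩
    have hdj : dT tj = j.1 := hd ⟨j, hlen ▸ j.2⟩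
    constructor
    · intro hvij
      rw [hv' i, hv' j] at hvij
      have : ti = tj := f.injective hvij
      exact Fin.ext (by rw [← hdi, ← hdj, this])
    · intro hij
      have hne : ti ≠ tj := by
        intro h
        exact hij (Fin.ext (by rw [← hdi, ← hdj, h]))
      rw [hv' i, hv' j, f.map_adj_iff]
      constructor
      · intro h
        have := (show _ ≠ _ ∧ _ ∧ _ from h).2.2
        rwa [hdi, hdj] at this
      · intro h
        exact (⟨hne, hchain ti (List.get_mem t _) tj (List.get_mem t _),
          by rwa [hdi, hdj]⟩ : ti ≠ tj ∧ (ti ≤ tj ∨ tj ≤ ti) ∧ G.Adj (dT ti) (dT tj))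
  refine ⟨⟨⟨v, ?_⟩, ?_⟩, rfl⟩
  · intro m n h
    have := (key (max m n + 1) ⟨m, by omega⟩ ⟨n, by omega⟩).1 h
    simpa using congrArg Fin.val this
  · intro a b
    by_cases hab : a = b
    · subst hab; simp
    · exact (key (max a b + 1) ⟨a, by omega⟩ ⟨b, by omega⟩).2
        (by simpa [Fin.ext_iff] using hab)
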